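/- For all real numbers u_pt, u_x, u_x2, u_x3, u_x4, u_x5, u_x6, u_x7, u_x8, the degree-8 polynomial P(x) = u_pt + u_x·L₁(x) + u_x2·L₂(x) + u_x3·L₃(x) + u_x4·L₄(x) + u_x5·L₅(x) + u_x6·L₆(x) + u_x7·L₇(x) + u_x8·L₈(x) has smoothness indicator β(P) = (u_x + u_x3/10 + u_x5/126 + u_x7/1716)² + (13/3)·(u_x2 + (123/455)·u_x4 + (85/2002)·u_x6 + (29/5577)·u_x8)² + (781/20)·(u_x3 + (26045/49203)·u_x5 + (8395/60918)·u_x7)² + (1421461/2275)·(u_x4 + (81596225/93816426)·u_x6 + (618438835/1829420307)·u_x8)² + (21520059541/1377684)·(u_x5 + (722379670131/559521548066)·u_x7)² + (15510384942580921/27582029244)·(u_x6 + (5423630339859998294/3024525063803279595)·u_x8)² + (12210527897166191835083/443141066068272)·(u_x7)² + (75509368098103789336083731407561/42818201328263029226415)·(u_x8)². -/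

import Mathlib

set_option maxHeartbeats 1000000

open Polynomial

/-- Legendre polynomial `L₁` shifted to `[−1/2, 1/2]`, as a real polynomial. -/
noncomputable def L1 : ℝ[X] := X

/-- Legendre polynomial `L₂` shifted to `[−1/2, 1/2]`, as a real polynomial. -/
noncomputable def L2 : ℝ[X] := X ^ 2 - C (1 / 12)

/-- Legendre polynomial `L₃` shifted to `[−1/2, 1/2]`, as a real polynomial. -/
noncomputable def L3 : ℝ[X] := X ^ 3 - C (3 / 20) * X

/-- Legendre polynomial `L₄` shifted to `[−1/2, 1/2]`, as a real polynomial. -/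
noncomputable def L4 : ℝ[X] := X ^ 4 - C (3 / 14) * X ^ 2 + C (3 / 560)

/-- Legendre polynomial `L₅` shifted to `[−1/2, 1/2]`, as a real polynomial. -/
noncomputable def L5 : ℝ[X] := X ^ 5 - C (5 / 18) * X ^ 3 + C (5 / 336) * X

/-- Legendre polynomial `L₆` shifted to `[−1/2, 1/2]`, as a real polynomial. -/
noncomputable def L6 : ℝ[X] :=
  X ^ 6 - C (15 / 44) * X ^ 4 + C (5 / 176) * X ^ 2 - C (5 / 14784)

/-- Legendre polynomial `L₇` shifted to `[−1/2, 1/2]`, as a real polynomial. -/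
noncomputable def L7 : ℝ[X] :=
  X ^ 7 - C (21 / 52) * X ^ 5 + C (105 / 2288) * X ^ 3 - C (35 / 27456) * X

/-- Legendre polynomial `L₈` shifted to `[−1/2, 1/2]`, as a real polynomial. -/
noncomputable def L8 : ℝ[X] :=
  X ^ 8 - C (7 / 15) * X ^ 6 + C (7 / 104) * X ^ 4 - C (7 / 2288) * X ^ 2 + C (7 / 329472)

/-- The Jiang–Shu smoothness indicator of a real polynomial on the unit zone `[−1/2, 1/2]`:
`β(P) = Σ_{l=1}^{deg P} ∫_{−1/2}^{1/2} (P⁽ˡ⁾(x))² dx`. -/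
noncomputable def beta (P : ℝ[X]) : ℝ :=
  ∑ l ∈ Finset.Icc 1 P.natDegree,
    ∫ x in (-(1 : ℝ) / 2)..(1 / 2), ((derivative^[l] P).eval x) ^ 2

private lemma integral_sq (Q : ℝ[X]) (h : Q.natDegree < 9) (a b : ℝ) :
    ∫ x in a..b, (Q.eval x)^2
      = ∑ i ∈ Finset.range 9, ∑ j ∈ Finset.range 9,
          Q.coeff i * Q.coeff j *
            ((b ^ (i+j+1) - a ^ (i+j+1)) / ((i:ℝ)+(j:ℝ)+1)) := by
  have h1 : ∀ x : ℝ, (Q.eval x)^2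
      = ∑ i ∈ Finset.range 9, ∑ j ∈ Finset.range 9, Q.coeff i * Q.coeff j * x^(i+j) := by
    intro x
    have he : Q.eval x = ∑ i ∈ Finset.range 9, Q.coeff i * x ^ i := by
      conv_lhs => rw [Q.as_sum_range' 9 h]
      simp [eval_finset_sum]
    rw [sq, he, Finset.sum_mul_sum]
    refine Finset.sum_congr rfl fun i _ => Finset.sum_congr rfl fun j _ => ?_
    rw [pow_add]; ring
  simp_rw [h1]
  rw [intervalIntegral.integral_finset_sum]
  · refine Finset.sum_congr rfl fun i _ => ?_
    rw [intervalIntegral.integral_finset_sum]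
    · refine Finset.sum_congr rfl fun j _ => ?_
      rw [intervalIntegral.integral_const_mul, integral_pow]
      push_cast; ring
    · exact fun j _ => (Continuous.intervalIntegrable (by continuity) _ _)
  · exact fun i _ => (Continuous.intervalIntegrable (by continuity) _ _)

/-- The Jiang–Shu smoothness indicator of any degree-8 polynomial written in the shifted
Legendre basis is a sum of perfect squares. -/
theorem smoothness_indicator_r9 (upt ux ux2 ux3 ux4 ux5 ux6 ux7 ux8 : ℝ) :
    beta (C upt + C ux * L1 + C ux2 * L2 + C ux3 * L3 + C ux4 * L4
        + C ux5 * L5 + C ux6 * L6 + C ux7 * L7 + C ux8 * L8) =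
      (ux + ux3 / 10 + ux5 / 126 + ux7 / 1716) ^ 2
        + (13 / 3) * (ux2 + (123 / 455) * ux4 + (85 / 2002) * ux6 + (29 / 5577) * ux8) ^ 2
        + (781 / 20) * (ux3 + (26045 / 49203) * ux5 + (8395 / 60918) * ux7) ^ 2
        + (1421461 / 2275)
          * (ux4 + (81596225 / 93816426) * ux6 + (618438835 / 1829420307) * ux8) ^ 2
        + (21520059541 / 1377684) * (ux5 + (722379670131 / 559521548066) * ux7) ^ 2
        + (15510384942580921 / 27582029244)
          * (ux6 + (5423630339859998294 / 3024525063803279595) * ux8) ^ 2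
        + (12210527897166191835083 / 443141066068272) * ux7 ^ 2
        + (75509368098103789336083731407561 / 42818201328263029226415) * ux8 ^ 2 := by
  set P : ℝ[X] := C upt + C ux * L1 + C ux2 * L2 + C ux3 * L3 + C ux4 * L4
      + C ux5 * L5 + C ux6 * L6 + C ux7 * L7 + C ux8 * L8 with hP
  have hdeg : P.natDegree ≤ 8 := by
    rw [hP]; unfold L1 L2 L3 L4 L5 L6 L7 L8; compute_degree!
  have hd9 : ∀ l : ℕ, (derivative^[l] P).natDegree < 9 := by
    intro l; have := P.natDegree_iterate_derivative l; omega
  have hz : ∀ l n : ℕ, 8 < l + n → 1 ≤ n → (derivative^[l] P).coeff n = 0 := by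
    intro l n h hn
    apply Polynomial.coeff_eq_zero_of_natDegree_lt
    have := P.natDegree_iterate_derivative l; omega
  have hbeta : beta P = ∑ l ∈ Finset.Icc 1 8,
      ∫ x in (-(1 : ℝ) / 2)..(1 / 2), ((derivative^[l] P).eval x) ^ 2 := by
    unfold beta
    refine Finset.sum_subset (Finset.Icc_subset_Icc_right hdeg) ?_
    intro l hl hl'
    simp only [Finset.mem_Icc] at hl hl'
    have hplt : P.natDegree < l := by omega
    rw [Polynomial.iterate_derivative_eq_zero hplt]
    simp
  have c0 : P.coeff 0 = upt - (1/12) * ux2 + (3/560) * ux4 - (5/14784) * ux6 + (7/329472) * ux8 := by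
    simp [hP, L1, L2, L3, L4, L5, L6, L7, L8, coeff_X_pow]
    try ring
  have c1 : P.coeff 1 = ux - (3/20) * ux3 + (5/336) * ux5 - (35/27456) * ux7 := by
    simp [hP, L1, L2, L3, L4, L5, L6, L7, L8, coeff_X_pow]
    try ring
  have c2 : P.coeff 2 = ux2 - (3/14) * ux4 + (5/176) * ux6 - (7/2288) * ux8 := by
    simp [hP, L1, L2, L3, L4, L5, L6, L7, L8, coeff_X_pow]
    try ring
  have c3 : P.coeff 3 = ux3 - (5/18) * ux5 + (105/2288) * ux7 := by
    simp [hP, L1, L2, L3, L4, L5, L6, L7, L8, coeff_X_pow]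
    try ring
  have c4 : P.coeff 4 = ux4 - (15/44) * ux6 + (7/104) * ux8 := by
    simp [hP, L1, L2, L3, L4, L5, L6, L7, L8, coeff_X_pow]
    try ring
  have c5 : P.coeff 5 = ux5 - (21/52) * ux7 := by
    simp [hP, L1, L2, L3, L4, L5, L6, L7, L8, coeff_X_pow]
    try ring
  have c6 : P.coeff 6 = ux6 - (7/15) * ux8 := by
    simp [hP, L1, L2, L3, L4, L5, L6, L7, L8, coeff_X_pow]
    try ring
  have c7 : P.coeff 7 = ux7 := by
    simp [hP, L1, L2, L3, L4, L5, L6, L7, L8, coeff_X_pow]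
    try ring
  have c8 : P.coeff 8 = ux8 := by
    simp [hP, L1, L2, L3, L4, L5, L6, L7, L8, coeff_X_pow]
    try ring
  have d1_0 : (derivative^[1] P).coeff 0 = ux - (3/20) * ux3 + (5/336) * ux5 - (35/27456) * ux7 := by
    rw [Polynomial.coeff_iterate_derivative, show ((0:ℕ)+1) = 1 from rfl,
        show Nat.descFactorial 1 1 = 1 from rfl, c1, nsmul_eq_mul]
    push_cast; ring
  have d1_1 : (derivative^[1] P).coeff 1 = 2 * ux2 - (3/7) * ux4 + (5/88) * ux6 - (7/1144) * ux8 := by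
    rw [Polynomial.coeff_iterate_derivative, show ((1:ℕ)+1) = 2 from rfl,
        show Nat.descFactorial 2 1 = 2 from rfl, c2, nsmul_eq_mul]
    push_cast; ring
  have d1_2 : (derivative^[1] P).coeff 2 = 3 * ux3 - (5/6) * ux5 + (315/2288) * ux7 := by
    rw [Polynomial.coeff_iterate_derivative, show ((2:ℕ)+1) = 3 from rfl,
        show Nat.descFactorial 3 1 = 3 from rfl, c3, nsmul_eq_mul]
    push_cast; ring
  have d1_3 : (derivative^[1] P).coeff 3 = 4 * ux4 - (15/11) * ux6 + (7/26) * ux8 := by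
    rw [Polynomial.coeff_iterate_derivative, show ((3:ℕ)+1) = 4 from rfl,
        show Nat.descFactorial 4 1 = 4 from rfl, c4, nsmul_eq_mul]
    push_cast; ring
  have d1_4 : (derivative^[1] P).coeff 4 = 5 * ux5 - (105/52) * ux7 := by
    rw [Polynomial.coeff_iterate_derivative, show ((4:ℕ)+1) = 5 from rfl,
        show Nat.descFactorial 5 1 = 5 from rfl, c5, nsmul_eq_mul]
    push_cast; ring
  have d1_5 : (derivative^[1] P).coeff 5 = 6 * ux6 - (14/5) * ux8 := by
    rw [Polynomial.coeff_iterate_derivative, show ((5:ℕ)+1) = 6 from rfl,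
        show Nat.descFactorial 6 1 = 6 from rfl, c6, nsmul_eq_mul]
    push_cast; ring
  have d1_6 : (derivative^[1] P).coeff 6 = 7 * ux7 := by
    rw [Polynomial.coeff_iterate_derivative, show ((6:ℕ)+1) = 7 from rfl,
        show Nat.descFactorial 7 1 = 7 from rfl, c7, nsmul_eq_mul]
    push_cast; ring
  have d1_7 : (derivative^[1] P).coeff 7 = 8 * ux8 := by
    rw [Polynomial.coeff_iterate_derivative, show ((7:ℕ)+1) = 8 from rfl,
        show Nat.descFactorial 8 1 = 8 from rfl, c8, nsmul_eq_mul]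
    push_cast; ring
  have d2_0 : (derivative^[2] P).coeff 0 = 2 * ux2 - (3/7) * ux4 + (5/88) * ux6 - (7/1144) * ux8 := by
    rw [Polynomial.coeff_iterate_derivative, show ((0:ℕ)+2) = 2 from rfl,
        show Nat.descFactorial 2 2 = 2 from rfl, c2, nsmul_eq_mul]
    push_cast; ring
  have d2_1 : (derivative^[2] P).coeff 1 = 6 * ux3 - (5/3) * ux5 + (315/1144) * ux7 := by
    rw [Polynomial.coeff_iterate_derivative, show ((1:ℕ)+2) = 3 from rfl,
        show Nat.descFactorial 3 2 = 6 from rfl, c3, nsmul_eq_mul]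
    push_cast; ring
  have d2_2 : (derivative^[2] P).coeff 2 = 12 * ux4 - (45/11) * ux6 + (21/26) * ux8 := by
    rw [Polynomial.coeff_iterate_derivative, show ((2:ℕ)+2) = 4 from rfl,
        show Nat.descFactorial 4 2 = 12 from rfl, c4, nsmul_eq_mul]
    push_cast; ring
  have d2_3 : (derivative^[2] P).coeff 3 = 20 * ux5 - (105/13) * ux7 := by
    rw [Polynomial.coeff_iterate_derivative, show ((3:ℕ)+2) = 5 from rfl,
        show Nat.descFactorial 5 2 = 20 from rfl, c5, nsmul_eq_mul]
    push_cast; ring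
  have d2_4 : (derivative^[2] P).coeff 4 = 30 * ux6 - 14 * ux8 := by
    rw [Polynomial.coeff_iterate_derivative, show ((4:ℕ)+2) = 6 from rfl,
        show Nat.descFactorial 6 2 = 30 from rfl, c6, nsmul_eq_mul]
    push_cast; ring
  have d2_5 : (derivative^[2] P).coeff 5 = 42 * ux7 := by
    rw [Polynomial.coeff_iterate_derivative, show ((5:ℕ)+2) = 7 from rfl,
        show Nat.descFactorial 7 2 = 42 from rfl, c7, nsmul_eq_mul]
    push_cast; ring
  have d2_6 : (derivative^[2] P).coeff 6 = 56 * ux8 := by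
    rw [Polynomial.coeff_iterate_derivative, show ((6:ℕ)+2) = 8 from rfl,
        show Nat.descFactorial 8 2 = 56 from rfl, c8, nsmul_eq_mul]
    push_cast; ring
  have d3_0 : (derivative^[3] P).coeff 0 = 6 * ux3 - (5/3) * ux5 + (315/1144) * ux7 := by
    rw [Polynomial.coeff_iterate_derivative, show ((0:ℕ)+3) = 3 from rfl,
        show Nat.descFactorial 3 3 = 6 from rfl, c3, nsmul_eq_mul]
    push_cast; ring
  have d3_1 : (derivative^[3] P).coeff 1 = 24 * ux4 - (90/11) * ux6 + (21/13) * ux8 := by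
    rw [Polynomial.coeff_iterate_derivative, show ((1:ℕ)+3) = 4 from rfl,
        show Nat.descFactorial 4 3 = 24 from rfl, c4, nsmul_eq_mul]
    push_cast; ring
  have d3_2 : (derivative^[3] P).coeff 2 = 60 * ux5 - (315/13) * ux7 := by
    rw [Polynomial.coeff_iterate_derivative, show ((2:ℕ)+3) = 5 from rfl,
        show Nat.descFactorial 5 3 = 60 from rfl, c5, nsmul_eq_mul]
    push_cast; ring
  have d3_3 : (derivative^[3] P).coeff 3 = 120 * ux6 - 56 * ux8 := by
    rw [Polynomial.coeff_iterate_derivative, show ((3:ℕ)+3) = 6 from rfl,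
        show Nat.descFactorial 6 3 = 120 from rfl, c6, nsmul_eq_mul]
    push_cast; ring
  have d3_4 : (derivative^[3] P).coeff 4 = 210 * ux7 := by
    rw [Polynomial.coeff_iterate_derivative, show ((4:ℕ)+3) = 7 from rfl,
        show Nat.descFactorial 7 3 = 210 from rfl, c7, nsmul_eq_mul]
    push_cast; ring
  have d3_5 : (derivative^[3] P).coeff 5 = 336 * ux8 := by
    rw [Polynomial.coeff_iterate_derivative, show ((5:ℕ)+3) = 8 from rfl,
        show Nat.descFactorial 8 3 = 336 from rfl, c8, nsmul_eq_mul]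
    push_cast; ring
  have d4_0 : (derivative^[4] P).coeff 0 = 24 * ux4 - (90/11) * ux6 + (21/13) * ux8 := by
    rw [Polynomial.coeff_iterate_derivative, show ((0:ℕ)+4) = 4 from rfl,
        show Nat.descFactorial 4 4 = 24 from rfl, c4, nsmul_eq_mul]
    push_cast; ring
  have d4_1 : (derivative^[4] P).coeff 1 = 120 * ux5 - (630/13) * ux7 := by
    rw [Polynomial.coeff_iterate_derivative, show ((1:ℕ)+4) = 5 from rfl,
        show Nat.descFactorial 5 4 = 120 from rfl, c5, nsmul_eq_mul]
    push_cast; ring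
  have d4_2 : (derivative^[4] P).coeff 2 = 360 * ux6 - 168 * ux8 := by
    rw [Polynomial.coeff_iterate_derivative, show ((2:ℕ)+4) = 6 from rfl,
        show Nat.descFactorial 6 4 = 360 from rfl, c6, nsmul_eq_mul]
    push_cast; ring
  have d4_3 : (derivative^[4] P).coeff 3 = 840 * ux7 := by
    rw [Polynomial.coeff_iterate_derivative, show ((3:ℕ)+4) = 7 from rfl,
        show Nat.descFactorial 7 4 = 840 from rfl, c7, nsmul_eq_mul]
    push_cast; ring
  have d4_4 : (derivative^[4] P).coeff 4 = 1680 * ux8 := by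
    rw [Polynomial.coeff_iterate_derivative, show ((4:ℕ)+4) = 8 from rfl,
        show Nat.descFactorial 8 4 = 1680 from rfl, c8, nsmul_eq_mul]
    push_cast; ring
  have d5_0 : (derivative^[5] P).coeff 0 = 120 * ux5 - (630/13) * ux7 := by
    rw [Polynomial.coeff_iterate_derivative, show ((0:ℕ)+5) = 5 from rfl,
        show Nat.descFactorial 5 5 = 120 from rfl, c5, nsmul_eq_mul]
    push_cast; ring
  have d5_1 : (derivative^[5] P).coeff 1 = 720 * ux6 - 336 * ux8 := by
    rw [Polynomial.coeff_iterate_derivative, show ((1:ℕ)+5) = 6 from rfl,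
        show Nat.descFactorial 6 5 = 720 from rfl, c6, nsmul_eq_mul]
    push_cast; ring
  have d5_2 : (derivative^[5] P).coeff 2 = 2520 * ux7 := by
    rw [Polynomial.coeff_iterate_derivative, show ((2:ℕ)+5) = 7 from rfl,
        show Nat.descFactorial 7 5 = 2520 from rfl, c7, nsmul_eq_mul]
    push_cast; ring
  have d5_3 : (derivative^[5] P).coeff 3 = 6720 * ux8 := by
    rw [Polynomial.coeff_iterate_derivative, show ((3:ℕ)+5) = 8 from rfl,
        show Nat.descFactorial 8 5 = 6720 from rfl, c8, nsmul_eq_mul]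
    push_cast; ring
  have d6_0 : (derivative^[6] P).coeff 0 = 720 * ux6 - 336 * ux8 := by
    rw [Polynomial.coeff_iterate_derivative, show ((0:ℕ)+6) = 6 from rfl,
        show Nat.descFactorial 6 6 = 720 from rfl, c6, nsmul_eq_mul]
    push_cast; ring
  have d6_1 : (derivative^[6] P).coeff 1 = 5040 * ux7 := by
    rw [Polynomial.coeff_iterate_derivative, show ((1:ℕ)+6) = 7 from rfl,
        show Nat.descFactorial 7 6 = 5040 from rfl, c7, nsmul_eq_mul]
    push_cast; ring
  have d6_2 : (derivative^[6] P).coeff 2 = 20160 * ux8 := by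
    rw [Polynomial.coeff_iterate_derivative, show ((2:ℕ)+6) = 8 from rfl,
        show Nat.descFactorial 8 6 = 20160 from rfl, c8, nsmul_eq_mul]
    push_cast; ring
  have d7_0 : (derivative^[7] P).coeff 0 = 5040 * ux7 := by
    rw [Polynomial.coeff_iterate_derivative, show ((0:ℕ)+7) = 7 from rfl,
        show Nat.descFactorial 7 7 = 5040 from rfl, c7, nsmul_eq_mul]
    push_cast; ring
  have d7_1 : (derivative^[7] P).coeff 1 = 40320 * ux8 := by
    rw [Polynomial.coeff_iterate_derivative, show ((1:ℕ)+7) = 8 from rfl,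
        show Nat.descFactorial 8 7 = 40320 from rfl, c8, nsmul_eq_mul]
    push_cast; ring
  have d8_0 : (derivative^[8] P).coeff 0 = 40320 * ux8 := by
    rw [Polynomial.coeff_iterate_derivative, show ((0:ℕ)+8) = 8 from rfl,
        show Nat.descFactorial 8 8 = 40320 from rfl, c8, nsmul_eq_mul]
    push_cast; ring
  have I1 : (∫ x in (-(1 : ℝ) / 2)..(1 / 2), ((derivative^[1] P).eval x) ^ 2)
      = ux^2 + (1/5) * ux * ux3 + (1/63) * ux * ux5 + (1/858) * ux * ux7 + (1/3) * ux2^2 + (2/35) * ux2 * ux4 + (1/231) * ux2 * ux6 + (2/6435) * ux2 * ux8 + (3/50) * ux3^2 + (1/105) * ux3 * ux5 + (1/1430) * ux3 * ux7 + (2/245) * ux4^2 + (2/1617) * ux4 * ux6 + (4/45045) * ux4 * ux8 + (5/5292) * ux5^2 + (5/36036) * ux5 * ux7 + (1/10164) * ux6^2 + (1/70785) * ux6 * ux8 + (7/736164) * ux7^2 + (4/4601025) * ux8^2 := by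
    rw [integral_sq _ (hd9 1)]
    simp only [Finset.sum_range_succ, Finset.sum_range_zero]
    rw [d1_0, d1_1, d1_2, d1_3, d1_4, d1_5, d1_6, d1_7, hz 1 8 (by norm_num) (by norm_num)]
    push_cast
    ring
  have I2 : (∫ x in (-(1 : ℝ) / 2)..(1 / 2), ((derivative^[2] P).eval x) ^ 2)
      = 4 * ux2^2 + (16/7) * ux2 * ux4 + (4/11) * ux2 * ux6 + (32/715) * ux2 * ux8 + 3 * ux3^2 + (4/3) * ux3 * ux5 + (27/143) * ux3 * ux7 + (276/245) * ux4^2 + (32/77) * ux4 * ux6 + (808/15015) * ux4 * ux8 + (55/189) * ux5^2 + (40/429) * ux5 * ux7 + (50/847) * ux6^2 + (80/4719) * ux6 * ux8 + (413/40898) * ux7^2 + (280/184041) * ux8^2 := by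
    rw [integral_sq _ (hd9 2)]
    simp only [Finset.sum_range_succ, Finset.sum_range_zero]
    rw [d2_0, d2_1, d2_2, d2_3, d2_4, d2_5, d2_6, hz 2 7 (by norm_num) (by norm_num), hz 2 8 (by norm_num) (by norm_num)]
    push_cast
    ring
  have I3 : (∫ x in (-(1 : ℝ) / 2)..(1 / 2), ((derivative^[3] P).eval x) ^ 2)
      = 36 * ux3^2 + 40 * ux3 * ux5 + (1512/143) * ux3 * ux7 + 48 * ux4^2 + (432/11) * ux4 * ux6 + (576/65) * ux4 * ux8 + (280/9) * ux5^2 + (2820/143) * ux5 * ux7 + (11160/847) * ux6^2 + (976/143) * ux6 * ux8 + (85330/20449) * ux7^2 + (29792/27885) * ux8^2 := by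
    rw [integral_sq _ (hd9 3)]
    simp only [Finset.sum_range_succ, Finset.sum_range_zero]
    rw [d3_0, d3_1, d3_2, d3_3, d3_4, d3_5, hz 3 6 (by norm_num) (by norm_num), hz 3 7 (by norm_num) (by norm_num), hz 3 8 (by norm_num) (by norm_num)]
    push_cast
    ring
  have I4 : (∫ x in (-(1 : ℝ) / 2)..(1 / 2), ((derivative^[4] P).eval x) ^ 2)
      = 576 * ux4^2 + (11520/11) * ux4 * ux6 + (5376/13) * ux4 * ux8 + 1200 * ux5^2 + (20160/13) * ux5 * ux7 + (144720/121) * ux6^2 + (163584/143) * ux6 * ux8 + (127260/169) * ux7^2 + (289856/845) * ux8^2 := by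
    rw [integral_sq _ (hd9 4)]
    simp only [Finset.sum_range_succ, Finset.sum_range_zero]
    rw [d4_0, d4_1, d4_2, d4_3, d4_4, hz 4 5 (by norm_num) (by norm_num), hz 4 6 (by norm_num) (by norm_num), hz 4 7 (by norm_num) (by norm_num), hz 4 8 (by norm_num) (by norm_num)]
    push_cast
    ring
  have I5 : (∫ x in (-(1 : ℝ) / 2)..(1 / 2), ((derivative^[5] P).eval x) ^ 2)
      = 14400 * ux5^2 + (504000/13) * ux5 * ux7 + 43200 * ux6^2 + 80640 * ux6 * ux8 + (10372320/169) * ux7^2 + 53760 * ux8^2 := by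
    rw [integral_sq _ (hd9 5)]
    simp only [Finset.sum_range_succ, Finset.sum_range_zero]
    rw [d5_0, d5_1, d5_2, d5_3, hz 5 4 (by norm_num) (by norm_num), hz 5 5 (by norm_num) (by norm_num), hz 5 6 (by norm_num) (by norm_num), hz 5 7 (by norm_num) (by norm_num), hz 5 8 (by norm_num) (by norm_num)]
    push_cast
    ring
  have I6 : (∫ x in (-(1 : ℝ) / 2)..(1 / 2), ((derivative^[6] P).eval x) ^ 2)
      = 518400 * ux6^2 + 1935360 * ux6 * ux8 + 2116800 * ux7^2 + 4064256 * ux8^2 := by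
    rw [integral_sq _ (hd9 6)]
    simp only [Finset.sum_range_succ, Finset.sum_range_zero]
    rw [d6_0, d6_1, d6_2, hz 6 3 (by norm_num) (by norm_num), hz 6 4 (by norm_num) (by norm_num), hz 6 5 (by norm_num) (by norm_num), hz 6 6 (by norm_num) (by norm_num), hz 6 7 (by norm_num) (by norm_num), hz 6 8 (by norm_num) (by norm_num)]
    push_cast
    ring
  have I7 : (∫ x in (-(1 : ℝ) / 2)..(1 / 2), ((derivative^[7] P).eval x) ^ 2)
      = 25401600 * ux7^2 + 135475200 * ux8^2 := by
    rw [integral_sq _ (hd9 7)]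
    simp only [Finset.sum_range_succ, Finset.sum_range_zero]
    rw [d7_0, d7_1, hz 7 2 (by norm_num) (by norm_num), hz 7 3 (by norm_num) (by norm_num), hz 7 4 (by norm_num) (by norm_num), hz 7 5 (by norm_num) (by norm_num), hz 7 6 (by norm_num) (by norm_num), hz 7 7 (by norm_num) (by norm_num), hz 7 8 (by norm_num) (by norm_num)]
    push_cast
    ring
  have I8 : (∫ x in (-(1 : ℝ) / 2)..(1 / 2), ((derivative^[8] P).eval x) ^ 2)
      = 1625702400 * ux8^2 := by
    rw [integral_sq _ (hd9 8)]
    simp only [Finset.sum_range_succ, Finset.sum_range_zero]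
    rw [d8_0, hz 8 1 (by norm_num) (by norm_num), hz 8 2 (by norm_num) (by norm_num), hz 8 3 (by norm_num) (by norm_num), hz 8 4 (by norm_num) (by norm_num), hz 8 5 (by norm_num) (by norm_num), hz 8 6 (by norm_num) (by norm_num), hz 8 7 (by norm_num) (by norm_num), hz 8 8 (by norm_num) (by norm_num)]
    push_cast
    ring
  rw [hbeta, ← Finset.Ico_add_one_right_eq_Icc, Finset.sum_Ico_eq_sum_range,
      show (8:ℕ)+1-1 = 8 from rfl]
  simp only [Finset.sum_range_succ, Finset.sum_range_zero, Nat.reduceAdd, zero_add]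
  rw [I1, I2, I3, I4, I5, I6, I7, I8]
  ring
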